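/- Let n ≥ 1 be an integer. If n cannot be written as k(3k−1)/2 + ℓ(ℓ−1) with k an integer and ℓ a positive integer, or if n cannot be written as ℓ(ℓ−1)/2 + 4·k(3k−1)/2 with k an integer and ℓ a positive integer, then C̄_{6,1}(n) ≡ 0 (mod 3). -/

import Mathlib

open Finset

section Cong
variable {R : Type*} [CommRing R] {M f g h i : R}

lemma cong_mul (h1 : M ∣ f - g) (h2 : M ∣ h - i) : M ∣ f * h - g * i := by
  have : f * h - g * i = (f - g) * h + g * (h - i) := by ring
  rw [this]; exact dvd_add (h1.mul_right _) (h2.mul_left _)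

lemma cong_trans (h1 : M ∣ f - g) (h2 : M ∣ g - h) : M ∣ f - h := by
  have : f - h = (f - g) + (g - h) := by ring
  rw [this]; exact dvd_add h1 h2

lemma cong_symm (h1 : M ∣ f - g) : M ∣ g - f := by
  have : g - f = -(f - g) := by ring
  rw [this]; exact h1.neg_right

lemma cong_prod_one {ι : Type*} (s : Finset ι) (F : ι → R)
    (hF : ∀ j ∈ s, M ∣ F j - 1) : M ∣ (∏ j ∈ s, F j) - 1 := by
  classical
  induction s using Finset.induction with
  | empty => simp
  | insert a s hx ih =>
    rw [Finset.prod_insert hx]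
    have h1 := hF a (mem_insert_self a s)
    have h2 := ih (fun j hj => hF j (mem_insert_of_mem hj))
    have := cong_mul h1 h2
    simpa using this

lemma cong_sum {ι : Type*} (s : Finset ι) (F G : ι → R)
    (hF : ∀ j ∈ s, M ∣ F j - G j) : M ∣ (∑ j ∈ s, F j) - (∑ j ∈ s, G j) := by
  rw [← Finset.sum_sub_distrib]
  exact Finset.dvd_sum hF

lemma cong_cancel (u : R) (hu : IsUnit u) (h1 : M ∣ f * u - g * u) : M ∣ f - g := by
  obtain ⟨v, hv⟩ := hu.exists_right_inv
  have : f - g = (f * u - g * u) * v := by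
    have : f - g = (f - g) * (u * v) := by rw [hv]; ring
    rw [this]; ring
  rw [this]; exact h1.mul_right _

end Cong

section ProdSplit
variable {R : Type*} [CommMonoid R]

lemma prod_range_mul (a A : ℕ) (g : ℕ → R) :
    ∏ i ∈ range (a * A), g i = ∏ j ∈ range A, ∏ r ∈ range a, g (a * j + r) := by
  induction A with
  | zero => simp
  | succ A ih =>
    rw [Nat.mul_succ, Finset.prod_range_add, ih, Finset.prod_range_succ]

end ProdSplit

section GB
variable {R : Type*} [CommRing R] (Q : R)

/-- Gaussian binomial polynomial in base `Q`. -/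
def gb : ℕ → ℕ → R
  | 0, 0 => 1
  | 0, _ + 1 => 0
  | _ + 1, 0 => 1
  | n + 1, k + 1 => Q ^ (k + 1) * gb n (k + 1) + gb n k

@[simp] lemma gb_zero_right : ∀ n, gb Q n 0 = 1
  | 0 => rfl
  | _ + 1 => rfl

lemma gb_succ_succ (n k : ℕ) :
    gb Q (n + 1) (k + 1) = Q ^ (k + 1) * gb Q n (k + 1) + gb Q n k := rfl

lemma gb_eq_zero : ∀ n k, n < k → gb Q n k = 0
  | 0, k + 1, _ => rfl
  | n + 1, k + 1, h => by
    rw [gb_succ_succ, gb_eq_zero n (k+1) (by omega), gb_eq_zero n k (by omega)]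
    ring

@[simp] lemma gb_diag : ∀ n, gb Q n n = 1
  | 0 => rfl
  | n + 1 => by
    rw [gb_succ_succ, gb_eq_zero Q n (n+1) (by omega), gb_diag n]; ring

lemma gb_one_aux : ∀ m, Q * gb Q m 1 + 1 = gb Q m 1 + Q ^ m
  | 0 => by simp [gb]
  | m + 1 => by
    have ih := gb_one_aux m
    rw [gb_succ_succ]
    simp only [gb_zero_right, pow_one]
    linear_combination Q * ih

/-- The other Pascal rule. -/
lemma gb_ruleA : ∀ n, ∀ k ≤ n, gb Q (n + 1) (k + 1) = gb Q n (k + 1) + Q ^ (n - k) * gb Q n k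
  | 0, 0, _ => by simp [gb]
  | n + 1, 0, _ => by
    rw [gb_succ_succ]
    simp only [gb_zero_right, pow_one, Nat.sub_zero, mul_one]
    linear_combination gb_one_aux Q (n + 1)
  | n + 1, k + 1, hk => by
    rcases Nat.lt_or_ge k n with hlt | hge
    · have ih1 := gb_ruleA n (k + 1) (by omega)
      have ih2 := gb_ruleA n k (by omega)
      have lhs_eq : gb Q (n + 1 + 1) (k + 1 + 1)
          = Q ^ (k + 2) * (gb Q n (k + 2) + Q ^ (n - (k + 1)) * gb Q n (k + 1))
            + (gb Q n (k + 1) + Q ^ (n - k) * gb Q n k) := by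
        rw [gb_succ_succ, ih1, ih2]
      have rhs_eq : gb Q (n + 1) (k + 1 + 1) + Q ^ (n + 1 - (k + 1)) * gb Q (n + 1) (k + 1)
          = (Q ^ (k + 2) * gb Q n (k + 2) + gb Q n (k + 1))
            + Q ^ (n - k) * (Q ^ (k + 1) * gb Q n (k + 1) + gb Q n k) := by
        rw [gb_succ_succ, gb_succ_succ, show n + 1 - (k + 1) = n - k from by omega]
      rw [lhs_eq, rhs_eq]
      have p1 : Q ^ (k + 2) * Q ^ (n - (k + 1)) = Q ^ (n + 1) := by
        rw [← pow_add]; congr 1; omega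
      have p2 : Q ^ (n - k) * Q ^ (k + 1) = Q ^ (n + 1) := by
        rw [← pow_add]; congr 1; omega
      linear_combination (gb Q n (k + 1) : R) * (p1 - p2)
    · have hk' : k = n := by omega
      subst hk'
      have z1 : gb Q (k + 1) (k + 2) = 0 := gb_eq_zero Q _ _ (by omega)
      rw [gb_succ_succ, z1]
      simp

/-- Anchor: `gb (n+k) k * ∏_{j<k} (1 - Q^(j+1)) = ∏_{j<k} (1 - Q^(n+1+j))`. -/
lemma gb_mul_prod : ∀ k n, gb Q (n + k) k * ∏ j ∈ range k, (1 - Q ^ (j + 1))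
    = ∏ j ∈ range k, (1 - Q ^ (n + 1 + j))
  | 0, n => by simp
  | k + 1, 0 => by
    simp only [Nat.zero_add, gb_diag, one_mul]
    exact Finset.prod_congr rfl fun j _ => by rw [Nat.add_comm 1 j]
  | k + 1, n + 1 => by
    have hA : gb Q (n + 1 + (k + 1)) (k + 1)
        = gb Q (n + (k + 1)) (k + 1) + Q ^ (n + 1) * gb Q (n + (k + 1)) k := by
      have h := gb_ruleA Q (n + (k + 1)) k (by omega)
      rw [show n + (k + 1) - k = n + 1 from by omega] at h
      rw [show n + 1 + (k + 1) = n + (k + 1) + 1 from by omega, h]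
    set W : R := ∏ j ∈ range k, (1 - Q ^ (n + 2 + j)) with hWdef
    have ih1 := gb_mul_prod (k + 1) n
    have ih2 := gb_mul_prod k (n + 1)
    have hgb : gb Q (n + 1 + k) k = gb Q (n + (k + 1)) k := by
      rw [show n + 1 + k = n + (k + 1) from by omega]
    rw [hgb] at ih2
    have ih2' : gb Q (n + (k + 1)) k * ∏ j ∈ range k, (1 - Q ^ (j + 1)) = W := by
      rw [ih2, hWdef]
    have split1 : ∏ j ∈ range (k + 1), (1 - Q ^ (n + 1 + j)) = (1 - Q ^ (n + 1)) * W :=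
      calc ∏ j ∈ range (k + 1), (1 - Q ^ (n + 1 + j))
          = (∏ j ∈ range k, (1 - Q ^ (n + 1 + (j + 1)))) * (1 - Q ^ (n + 1 + 0)) :=
            Finset.prod_range_succ' _ k
        _ = (1 - Q ^ (n + 1)) * W := by
            rw [show n + 1 + 0 = n + 1 from rfl, mul_comm]
            congr 1
            exact Finset.prod_congr rfl fun j _ => by
              rw [show n + 1 + (j + 1) = n + 2 + j from by omega]
    have split2 : ∏ j ∈ range (k + 1), (1 - Q ^ (n + 1 + 1 + j)) = W * (1 - Q ^ (n + 2 + k)) := by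
      rw [Finset.prod_range_succ, show n + 1 + 1 + k = n + 2 + k from by omega]
    have ih1' : gb Q (n + (k + 1)) (k + 1) * ∏ j ∈ range (k + 1), (1 - Q ^ (j + 1))
        = (1 - Q ^ (n + 1)) * W := by rw [ih1, split1]
    rw [hA, split2]
    have hP : ∏ j ∈ range (k + 1), (1 - Q ^ (j + 1))
        = (∏ j ∈ range k, (1 - Q ^ (j + 1))) * (1 - Q ^ (k + 1)) := Finset.prod_range_succ _ k
    rw [hP] at ih1' ⊢
    linear_combination ih1' + Q ^ (n + 1) * (1 - Q ^ (k + 1)) * ih2'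
end GB


section Exponents

/-- `k(k+1)/2` as a natural number. -/
def epn (k : ℤ) : ℕ := (k * (k + 1) / 2).toNat
/-- `k(k-1)/2` as a natural number. -/
def emn (k : ℤ) : ℕ := (k * (k - 1) / 2).toNat

lemma ep_nonneg (k : ℤ) : 0 ≤ k * (k + 1) / 2 := by
  apply Int.ediv_nonneg _ (by norm_num)
  nlinarith [sq_nonneg (2 * k + 1)]

lemma em_nonneg (k : ℤ) : 0 ≤ k * (k - 1) / 2 := by
  apply Int.ediv_nonneg _ (by norm_num)
  nlinarith [sq_nonneg (2 * k - 1)]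

lemma two_ep (k : ℤ) : 2 * (epn k : ℤ) = k * (k + 1) := by
  rw [epn, Int.toNat_of_nonneg (ep_nonneg k)]
  exact Int.mul_ediv_cancel' (Int.even_mul_succ_self k).two_dvd

lemma two_em (k : ℤ) : 2 * (emn k : ℤ) = k * (k - 1) := by
  rw [emn, Int.toNat_of_nonneg (em_nonneg k)]
  have h : Even (k * (k - 1)) := by
    have := Int.even_mul_succ_self (k - 1)
    simpa [mul_comm, sub_add_cancel] using this
  exact Int.mul_ediv_cancel' h.two_dvd

lemma ep_succ (k : ℤ) : (epn (k + 1) : ℤ) = epn k + (k + 1) := by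
  have h1 := two_ep (k + 1)
  have h2 := two_ep k
  have h : 2 * (epn (k + 1) : ℤ) = 2 * ((epn k : ℤ) + (k + 1)) := by linear_combination h1 - h2
  exact mul_left_cancel₀ two_ne_zero h

lemma em_succ (k : ℤ) : (emn (k + 1) : ℤ) = emn k + k := by
  have h1 := two_em (k + 1)
  have h2 := two_em k
  have h : 2 * (emn (k + 1) : ℤ) = 2 * ((emn k : ℤ) + k) := by linear_combination h1 - h2
  exact mul_left_cancel₀ two_ne_zero h

end Exponents

section JTP
variable {R : Type*} [CommRing R]

/-- The theta monomial `U^(k(k+1)/2) V^(k(k-1)/2)`. -/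
def tt (U V : R) (k : ℤ) : R := U ^ epn k * V ^ emn k

lemma monUV (U V : R) (a b e : ℕ) : U ^ a * V ^ b * (U * V) ^ e = U ^ (a + e) * V ^ (b + e) := by
  rw [mul_pow, pow_add, pow_add]; ring

lemma tshiftU (U V : R) (m : ℕ) (k : ℤ) (hk : k ≤ m) :
    tt U V k * U * (U * V) ^ m = tt U V (k + 1) * (U * V) ^ ((m : ℤ) - k).toNat := by
  have hep := ep_succ k
  have hem := em_succ k
  have e1 : epn k + 1 + m = epn (k + 1) + ((m : ℤ) - k).toNat := by omega
  have e2 : emn k + m = emn (k + 1) + ((m : ℤ) - k).toNat := by omega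
  calc tt U V k * U * (U * V) ^ m = U ^ (epn k + 1) * V ^ (emn k) * (U * V) ^ m := by
        rw [tt, pow_succ]; ring
    _ = U ^ (epn k + 1 + m) * V ^ (emn k + m) := monUV U V _ _ _
    _ = U ^ (epn (k + 1) + ((m : ℤ) - k).toNat) * V ^ (emn (k + 1) + ((m : ℤ) - k).toNat) := by
        rw [e1, e2]
    _ = tt U V (k + 1) * (U * V) ^ ((m : ℤ) - k).toNat := (monUV U V _ _ _).symm

lemma tshiftV (U V : R) (m : ℕ) (k : ℤ) (hk : -(m : ℤ) ≤ k) :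
    tt U V k * V * (U * V) ^ m = tt U V (k - 1) * (U * V) ^ ((m : ℤ) + k).toNat := by
  have hep := ep_succ (k - 1)
  have hem := em_succ (k - 1)
  rw [sub_add_cancel] at hep hem
  have e1 : epn k + m = epn (k - 1) + ((m : ℤ) + k).toNat := by omega
  have e2 : emn k + 1 + m = emn (k - 1) + ((m : ℤ) + k).toNat := by omega
  calc tt U V k * V * (U * V) ^ m = U ^ (epn k) * V ^ (emn k + 1) * (U * V) ^ m := by
        rw [tt, pow_succ]; ring
    _ = U ^ (epn k + m) * V ^ (emn k + 1 + m) := monUV U V _ _ _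
    _ = U ^ (epn (k - 1) + ((m : ℤ) + k).toNat) * V ^ (emn (k - 1) + ((m : ℤ) + k).toNat) := by
        rw [e1, e2]
    _ = tt U V (k - 1) * (U * V) ^ ((m : ℤ) + k).toNat := (monUV U V _ _ _).symm

/-- Gaussian binomial with integer index (zero for negative index). -/
def gbZ (Q : R) (n : ℕ) (k : ℤ) : R := if k < 0 then 0 else gb Q n k.toNat

lemma gbZ_neg (Q : R) (n : ℕ) {k : ℤ} (hk : k < 0) : gbZ Q n k = 0 := if_pos hk

lemma gbZ_of_nonneg (Q : R) (n : ℕ) {k : ℤ} (hk : 0 ≤ k) : gbZ Q n k = gb Q n k.toNat :=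
  if_neg (by omega)

lemma gbZ_big (Q : R) (n : ℕ) {k : ℤ} (hk : (n : ℤ) < k) : gbZ Q n k = 0 := by
  rw [gbZ_of_nonneg Q n (by omega)]
  exact gb_eq_zero Q n k.toNat (by omega)

@[simp] lemma gbZ_zero_right (Q : R) (n : ℕ) : gbZ Q n 0 = 1 := by
  rw [gbZ_of_nonneg Q n le_rfl]; simp

lemma gbZ_diag (Q : R) (n : ℕ) : gbZ Q n n = 1 := by
  rw [gbZ_of_nonneg Q n (by positivity)]; simp

lemma gbZ_ruleB (Q : R) (n : ℕ) (k : ℤ) :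
    gbZ Q (n + 1) k = Q ^ k.toNat * gbZ Q n k + gbZ Q n (k - 1) := by
  rcases lt_trichotomy k 0 with h | h | h
  · rw [gbZ_neg Q _ h, gbZ_neg Q _ h, gbZ_neg Q _ (by omega)]; ring
  · subst h
    rw [gbZ_zero_right, gbZ_zero_right, show (0:ℤ) - 1 = -1 from by ring,
      gbZ_neg Q n (show (-1:ℤ) < 0 by norm_num)]
    simp
  · obtain ⟨t, ht⟩ : ∃ t : ℕ, k = (t : ℤ) + 1 := ⟨(k - 1).toNat, by omega⟩
    subst ht
    rw [gbZ_of_nonneg Q _ (by omega), gbZ_of_nonneg Q _ (by omega),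
      gbZ_of_nonneg Q _ (by omega)]
    rw [show ((t : ℤ) + 1).toNat = t + 1 from by omega, show ((t : ℤ) + 1 - 1).toNat = t from by omega]
    exact gb_succ_succ Q n t

lemma gbZ_ruleA (Q : R) (n : ℕ) (k : ℤ) (hk : k ≤ (n : ℤ) + 1) :
    gbZ Q (n + 1) k = gbZ Q n k + Q ^ ((n : ℤ) + 1 - k).toNat * gbZ Q n (k - 1) := by
  rcases lt_trichotomy k 0 with h | h | h
  · rw [gbZ_neg Q _ h, gbZ_neg Q _ h, gbZ_neg Q _ (by omega)]; ring
  · subst h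
    rw [gbZ_zero_right, gbZ_zero_right, show (0:ℤ) - 1 = -1 from by ring,
      gbZ_neg Q n (show (-1:ℤ) < 0 by norm_num)]
    ring
  · obtain ⟨t, ht⟩ : ∃ t : ℕ, k = (t : ℤ) + 1 := ⟨(k - 1).toNat, by omega⟩
    subst ht
    rw [gbZ_of_nonneg Q _ (by omega), gbZ_of_nonneg Q _ (by omega),
      gbZ_of_nonneg Q _ (by omega)]
    rw [show ((t : ℤ) + 1).toNat = t + 1 from by omega, show ((t : ℤ) + 1 - 1).toNat = t from by omega,
      show ((n : ℤ) + 1 - ((t : ℤ) + 1)).toNat = n - t from by omega]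
    exact gb_ruleA Q n t (by omega)

lemma pascal2 (Q : R) (m : ℕ) (k : ℤ) (hk1 : -((m : ℤ) + 1) ≤ k) (hk2 : k ≤ (m : ℤ) + 1) :
    gbZ Q (2 * m + 2) (k + m + 1)
      = gbZ Q (2 * m) (k + m)
        + Q ^ ((m : ℤ) + 1 - k).toNat * gbZ Q (2 * m) (k + m - 1)
        + Q ^ ((m : ℤ) + 1 + k).toNat * gbZ Q (2 * m) (k + m + 1)
        + Q ^ (2 * m + 1) * gbZ Q (2 * m) (k + m) := by
  rcases eq_or_lt_of_le hk2 with h | hlt2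
  · subst h
    have e1 : gbZ Q (2 * m + 2) ((m : ℤ) + 1 + m + 1) = 1 := by
      rw [show (m : ℤ) + 1 + m + 1 = ((2 * m + 2 : ℕ) : ℤ) from by push_cast; ring]
      exact gbZ_diag _ _
    have e2 : gbZ Q (2 * m) ((m : ℤ) + 1 + m) = 0 := gbZ_big Q _ (by push_cast; omega)
    have e3 : gbZ Q (2 * m) ((m : ℤ) + 1 + m + 1) = 0 := gbZ_big Q _ (by push_cast; omega)
    have e4 : gbZ Q (2 * m) ((m : ℤ) + 1 + m - 1) = 1 := by
      rw [show (m : ℤ) + 1 + m - 1 = ((2 * m : ℕ) : ℤ) from by push_cast; ring]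
      exact gbZ_diag _ _
    rw [e1, e2, e3, e4, show ((m : ℤ) + 1 - ((m : ℤ) + 1)).toNat = 0 from by omega]
    ring
  rcases eq_or_lt_of_le hk1 with h | hlt1
  · rw [← h]
    have e1 : gbZ Q (2 * m + 2) (-((m : ℤ) + 1) + m + 1) = 1 := by
      rw [show -((m : ℤ) + 1) + m + 1 = 0 from by ring]; exact gbZ_zero_right _ _
    have e2 : gbZ Q (2 * m) (-((m : ℤ) + 1) + m) = 0 := gbZ_neg Q _ (by omega)
    have e3 : gbZ Q (2 * m) (-((m : ℤ) + 1) + m + 1) = 1 := by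
      rw [show -((m : ℤ) + 1) + m + 1 = 0 from by ring]; exact gbZ_zero_right _ _
    have e4 : gbZ Q (2 * m) (-((m : ℤ) + 1) + m - 1) = 0 := gbZ_neg Q _ (by omega)
    rw [e1, e2, e3, e4, show ((m : ℤ) + 1 + -((m : ℤ) + 1)).toNat = 0 from by omega]
    ring
  -- main case: -m ≤ k ≤ m
  have hk1' : -(m : ℤ) ≤ k := by omega
  have hk2' : k ≤ (m : ℤ) := by omega
  have step1 : gbZ Q (2 * m + 2) (k + m + 1)
      = Q ^ ((m : ℤ) + 1 + k).toNat * gbZ Q (2 * m + 1) (k + m + 1) + gbZ Q (2 * m + 1) (k + m) := by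
    rw [show 2 * m + 2 = (2 * m + 1) + 1 from by omega, gbZ_ruleB Q (2 * m + 1) (k + m + 1)]
    rw [show k + m + 1 - 1 = k + m from by ring, show (k + (m:ℤ) + 1).toNat = ((m : ℤ) + 1 + k).toNat from by omega]
  have step2 : gbZ Q (2 * m + 1) (k + m + 1)
      = gbZ Q (2 * m) (k + m + 1) + Q ^ ((m : ℤ) - k).toNat * gbZ Q (2 * m) (k + m) := by
    rw [show 2 * m + 1 = (2 * m) + 1 from rfl, gbZ_ruleA Q (2 * m) (k + m + 1) (by push_cast; omega)]
    rw [show ((2 * m : ℕ) : ℤ) + 1 - (k + m + 1) = (m : ℤ) - k from by push_cast; ring,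
      show k + m + 1 - 1 = k + m from by ring]
  have step3 : gbZ Q (2 * m + 1) (k + m)
      = gbZ Q (2 * m) (k + m) + Q ^ ((m : ℤ) + 1 - k).toNat * gbZ Q (2 * m) (k + m - 1) := by
    rw [show 2 * m + 1 = (2 * m) + 1 from rfl, gbZ_ruleA Q (2 * m) (k + m) (by push_cast; omega)]
    rw [show ((2 * m : ℕ) : ℤ) + 1 - (k + m) = (m : ℤ) + 1 - k from by push_cast; ring]
  rw [step1, step2, step3]
  have hpow1 : Q ^ ((m : ℤ) + 1 + k).toNat * Q ^ ((m : ℤ) - k).toNat = Q ^ (2 * m + 1) := by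
    rw [← pow_add]; congr 1; omega
  linear_combination (gbZ Q (2 * m) (k + m) : R) * hpow1
end JTP

section JTPmain
variable {R : Type*} [CommRing R]

lemma sum_shift (a b : ℤ) (f : ℤ → R) :
    ∑ k ∈ Finset.Icc (1 + a) (1 + b), f k = ∑ k ∈ Finset.Icc a b, f (1 + k) := by
  rw [← Finset.map_add_left_Icc, Finset.sum_map]
  rfl

theorem jtp (U V : R) : ∀ m : ℕ,
    ∏ j ∈ Finset.range m, ((1 + U * (U * V) ^ j) * (1 + V * (U * V) ^ j))
      = ∑ k ∈ Finset.Icc (-(m : ℤ)) (m : ℤ), gbZ (U * V) (2 * m) (k + m) * tt U V k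
  | 0 => by
    simp only [Finset.range_zero, Finset.prod_empty, Nat.cast_zero, neg_zero, Finset.Icc_self,
      Finset.sum_singleton, zero_add, mul_zero, add_zero, Nat.mul_zero]
    rw [gbZ_zero_right, tt]
    norm_num [epn, emn]
  | m + 1 => by
    have ih := jtp U V m
    set S := Finset.Icc (-(m : ℤ)) (m : ℤ) with hS
    set E := Finset.Icc (-(m : ℤ) - 1) ((m : ℤ) + 1) with hEdef
    have hSE : S ⊆ E := by
      intro x hx
      simp only [hS, hEdef, Finset.mem_Icc] at hx ⊢
      omega
    set Q := U * V with hQ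
    set c : ℤ → R := fun k => gbZ Q (2 * m) (k + m) * tt U V k with hc
    -- extension of the main sum
    have hS0 : ∑ k ∈ S, c k = ∑ k ∈ E, c k := by
      apply Finset.sum_subset hSE
      intro x hx hnx
      simp only [hS, hEdef, Finset.mem_Icc] at hx hnx
      show gbZ Q (2 * m) (x + m) * tt U V x = 0
      rcases show x < -(m:ℤ) ∨ (m:ℤ) < x by omega with h | h
      · rw [gbZ_neg Q _ (show x + (m:ℤ) < 0 by omega)]; ring
      · rw [gbZ_big Q _ (show ((2*m : ℕ):ℤ) < x + m by push_cast; omega)]; ring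
    -- the U-shifted sum
    have hSU : (∑ k ∈ S, c k) * (U * Q ^ m)
        = ∑ k ∈ E, gbZ Q (2 * m) (k + m - 1) * tt U V k * Q ^ (((m : ℤ) + 1 - k).toNat) := by
      rw [Finset.sum_mul]
      have step : ∀ k ∈ S, c k * (U * Q ^ m)
          = gbZ Q (2 * m) (k + m) * (tt U V (k + 1) * Q ^ (((m : ℤ) - k).toNat)) := by
        intro k hk
        simp only [hS, Finset.mem_Icc] at hk
        rw [hc, ← tshiftU U V m k hk.2, hQ]
        ring
      rw [Finset.sum_congr rfl step]
      have ext : ∑ k ∈ Finset.Icc (1 + -(m:ℤ)) (1 + (m:ℤ)),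
            gbZ Q (2 * m) (k + m - 1) * tt U V k * Q ^ (((m : ℤ) + 1 - k).toNat)
          = ∑ k ∈ E, gbZ Q (2 * m) (k + m - 1) * tt U V k * Q ^ (((m : ℤ) + 1 - k).toNat) := by
        apply Finset.sum_subset
        · intro x hx
          simp only [hEdef, Finset.mem_Icc] at hx ⊢
          omega
        · intro x hx hnx
          simp only [hEdef, Finset.mem_Icc] at hx hnx
          rw [gbZ_neg Q _ (show x + (m:ℤ) - 1 < 0 by omega)]
          ring
      rw [← ext, sum_shift]
      apply Finset.sum_congr rfl
      intro k hk
      rw [show 1 + k + (m:ℤ) - 1 = k + m from by ring, show 1 + k = k + 1 from by ring,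
        show (m : ℤ) + 1 - (k + 1) = (m:ℤ) - k from by ring]
      ring
    -- the V-shifted sum
    have hSV : (∑ k ∈ S, c k) * (V * Q ^ m)
        = ∑ k ∈ E, gbZ Q (2 * m) (k + m + 1) * tt U V k * Q ^ (((m : ℤ) + 1 + k).toNat) := by
      rw [Finset.sum_mul]
      have step : ∀ k ∈ S, c k * (V * Q ^ m)
          = gbZ Q (2 * m) (k + m) * (tt U V (k - 1) * Q ^ (((m : ℤ) + k).toNat)) := by
        intro k hk
        simp only [hS, Finset.mem_Icc] at hk
        rw [hc, ← tshiftV U V m k hk.1, hQ]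
        ring
      rw [Finset.sum_congr rfl step]
      have reidx : ∑ k ∈ S, gbZ Q (2 * m) (k + m) * (tt U V (k - 1) * Q ^ (((m : ℤ) + k).toNat))
          = ∑ k ∈ Finset.Icc (-(m:ℤ) - 1) ((m:ℤ) - 1),
              gbZ Q (2 * m) (k + m + 1) * tt U V k * Q ^ (((m : ℤ) + 1 + k).toNat) := by
        have hid : S = Finset.Icc (1 + (-(m:ℤ) - 1)) (1 + ((m:ℤ) - 1)) := by
          rw [hS]; congr 1 <;> ring
        rw [hid, sum_shift]
        apply Finset.sum_congr rfl
        intro k hk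
        rw [show 1 + k + (m:ℤ) = k + m + 1 from by ring, show 1 + k - 1 = k from by ring,
          show (m:ℤ) + (1 + k) = (m:ℤ) + 1 + k from by ring]
        ring
      rw [reidx]
      apply Finset.sum_subset
      · intro x hx
        simp only [hEdef, Finset.mem_Icc] at hx ⊢
        omega
      · intro x hx hnx
        simp only [hEdef, Finset.mem_Icc] at hx hnx
        rw [gbZ_big Q _ (show ((2*m : ℕ):ℤ) < x + m + 1 by push_cast; omega)]
        ring
    -- assemble
    rw [Finset.prod_range_succ, ih]
    have expandRHS : ∀ k ∈ E, gbZ Q (2 * (m + 1)) (k + ((m:ℕ) + 1 : ℕ)) * tt U V k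
        = c k + gbZ Q (2 * m) (k + m - 1) * tt U V k * Q ^ (((m : ℤ) + 1 - k).toNat)
          + gbZ Q (2 * m) (k + m + 1) * tt U V k * Q ^ (((m : ℤ) + 1 + k).toNat)
          + c k * Q ^ (2 * m + 1) := by
      intro k hk
      simp only [hEdef, Finset.mem_Icc] at hk
      have hp := pascal2 Q m k (by omega) (by omega)
      rw [hc]
      rw [show 2 * (m + 1) = 2 * m + 2 from by ring,
        show k + ((m:ℕ) + 1 : ℕ) = k + m + 1 from by push_cast; ring, hp]
      ring
    have hgoalidx : Finset.Icc (-((m:ℕ) + 1 : ℕ) : ℤ) (((m:ℕ) + 1 : ℕ) : ℤ) = E := by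
      rw [hEdef]; congr 1 <;> push_cast <;> ring
    rw [hgoalidx, Finset.sum_congr rfl expandRHS]
    have final : (1 + U * Q ^ m) * (1 + V * Q ^ m)
        = 1 + U * Q ^ m + V * Q ^ m + Q ^ (2 * m + 1) := by
      rw [hQ]; ring
    rw [final]
    have hS3 : (∑ k ∈ S, c k) * Q ^ (2 * m + 1) = ∑ k ∈ E, c k * Q ^ (2 * m + 1) := by
      rw [hS0, Finset.sum_mul]
    rw [mul_add, mul_add, mul_add, mul_one, hSU, hSV, hS3, hS0]
    rw [← Finset.sum_add_distrib, ← Finset.sum_add_distrib, ← Finset.sum_add_distrib]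
end JTPmain

section PSbasic
variable {R : Type*} [CommRing R]

/-- Truncated Euler product `∏_{j<K} (1 - Z^(j+1))`. -/
def F1 (Z : R) (K : ℕ) : R := ∏ j ∈ Finset.range K, (1 - Z ^ (j + 1))

variable (x : R)

lemma one_sub_shift {Z : R} (hZ : x ∣ Z) {ν e : ℕ} (he : ν ≤ e) :
    x ^ ν ∣ (1 - Z ^ e) - 1 := by
  have : (1 - Z ^ e) - 1 = -(Z ^ e) := by ring
  rw [this, dvd_neg]
  exact (pow_dvd_pow x he).trans (pow_dvd_pow_of_dvd hZ e)

lemma F1_mono {Z : R} (hZ : x ∣ Z) {ν K K' : ℕ} (hK : K ≤ K') (hν : ν ≤ K + 1) :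
    x ^ ν ∣ F1 Z K' - F1 Z K := by
  obtain ⟨d, hd⟩ := Nat.exists_eq_add_of_le hK
  subst hd
  rw [F1, F1, Finset.prod_range_add]
  have hkey : (∏ j ∈ Finset.range K, (1 - Z ^ (j + 1))) * (∏ j ∈ Finset.range d, (1 - Z ^ (K + j + 1)))
      - ∏ j ∈ Finset.range K, (1 - Z ^ (j + 1))
      = (∏ j ∈ Finset.range K, (1 - Z ^ (j + 1)))
        * ((∏ j ∈ Finset.range d, (1 - Z ^ (K + j + 1))) - 1) := by ring
  have hprod : x ^ ν ∣ (∏ j ∈ Finset.range d, (1 - Z ^ (K + j + 1))) - 1 := by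
    apply cong_prod_one
    intro j _
    exact one_sub_shift x hZ (by omega)
  rw [hkey]
  exact hprod.mul_left _

lemma F1_cong {Z : R} (hZ : x ∣ Z) {ν K K' : ℕ} (hν : ν ≤ K + 1) (hν' : ν ≤ K' + 1) :
    x ^ ν ∣ F1 Z K' - F1 Z K := by
  rcases le_total K K' with h | h
  · exact F1_mono x hZ h hν
  · exact cong_symm (F1_mono x hZ h hν')

/-- Stabilization: for suitable indices the Gaussian binomial is inverse to the Euler
product modulo `x^ν`. -/
lemma stab {Q : R} (hQ : x ∣ Q) {ν m i : ℕ} (h1 : ν ≤ i + 1) (h2 : i + ν ≤ 2 * m + 1)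
    (h3 : ν ≤ m + 1) (h4 : i ≤ 2 * m) :
    x ^ ν ∣ gb Q (2 * m) i * F1 Q m - 1 := by
  have anchor := gb_mul_prod Q i (2 * m - i)
  rw [show 2 * m - i + i = 2 * m from by omega] at anchor
  have hRHS : x ^ ν ∣ (∏ j ∈ Finset.range i, (1 - Q ^ (2 * m - i + 1 + j))) - 1 := by
    apply cong_prod_one
    intro j _
    exact one_sub_shift x hQ (by omega)
  have hF : x ^ ν ∣ F1 Q m - F1 Q i := F1_cong x hQ h1 h3
  have anchor' : gb Q (2 * m) i * F1 Q i = ∏ j ∈ Finset.range i, (1 - Q ^ (2 * m - i + 1 + j)) := by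
    rw [F1]; exact anchor
  have key : gb Q (2 * m) i * F1 Q m - 1
      = gb Q (2 * m) i * (F1 Q m - F1 Q i)
        + ((∏ j ∈ Finset.range i, (1 - Q ^ (2 * m - i + 1 + j))) - 1) := by
    rw [← anchor']
    ring
  rw [key]
  exact dvd_add (hF.mul_left _) hRHS

end PSbasic

section Char3
open PowerSeries
abbrev PS := PowerSeries (ZMod 3)

lemma three_eq_zero : (3 : PS) = 0 := by
  have h : ((3 : ℕ) : PS) = (PowerSeries.C ((3 : ℕ) : ZMod 3) : PS) := by
    rw [map_natCast]
  have h2 : ((3 : ℕ) : ZMod 3) = 0 := by decide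
  rw [show (3 : PS) = ((3 : ℕ) : PS) from by norm_num, h, h2, map_zero]

lemma cube_one_sub (W : PS) : (1 - W) ^ 3 = 1 - W ^ 3 := by
  linear_combination (W ^ 2 - W) * three_eq_zero

lemma F1_cube (Z : PS) (K : ℕ) : F1 (Z ^ 3) K = F1 Z K ^ 3 := by
  rw [F1, F1, ← Finset.prod_pow]
  apply Finset.prod_congr rfl
  intro j _
  rw [cube_one_sub, ← pow_mul, ← pow_mul, Nat.mul_comm]

lemma two_mul_two : (2 : PS) * 2 = 1 := by
  linear_combination three_eq_zero

end Char3

section Splits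
variable {R : Type*} [CommRing R]

/-- The product over `n ≡ ±1 mod 6` up to `6A`. -/
def Dprod (Z : R) (A : ℕ) : R := ∏ j ∈ Finset.range A, ((1 - Z ^ (6 * j + 1)) * (1 - Z ^ (6 * j + 5)))

lemma split6 (Z : R) (A : ℕ) :
    F1 Z (6 * A) * F1 (Z ^ 6) A = Dprod Z A * (F1 (Z ^ 2) (3 * A) * F1 (Z ^ 3) (2 * A)) := by
  rw [F1, F1, F1, F1, Dprod, prod_range_mul 6 A, prod_range_mul 3 A, prod_range_mul 2 A,
    ← Finset.prod_mul_distrib, ← Finset.prod_mul_distrib, ← Finset.prod_mul_distrib]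
  apply Finset.prod_congr rfl
  intro j _
  simp only [Finset.prod_range_succ, Finset.prod_range_zero, one_mul]
  ring

lemma split3 (Z : R) (A : ℕ) :
    F1 Z (3 * A) = (∏ j ∈ Finset.range A, ((1 - Z ^ (3 * j + 1)) * (1 - Z ^ (3 * j + 2))))
      * F1 (Z ^ 3) A := by
  rw [F1, F1, prod_range_mul 3 A, ← Finset.prod_mul_distrib]
  apply Finset.prod_congr rfl
  intro j _
  simp only [Finset.prod_range_succ, Finset.prod_range_zero, one_mul]
  ring

lemma plusminus (Z : R) (M : ℕ) :
    (∏ j ∈ Finset.range M, (1 + Z ^ (j + 1))) * F1 Z M = F1 (Z ^ 2) M := by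
  rw [F1, F1, ← Finset.prod_mul_distrib]
  apply Finset.prod_congr rfl
  intro j _
  ring

end Splits

section SplitE
open PowerSeries

lemma splitE (K : ℕ) :
    F1 (-X : PS) (2 * K) * (F1 (X : PS) (2 * K) * F1 ((X : PS) ^ 4) K)
      = F1 ((X : PS) ^ 2) K ^ 2 * F1 ((X : PS) ^ 2) (2 * K) := by
  rw [F1, F1, F1, F1, F1,
    prod_range_mul 2 K (fun i => (1 - (-X : PS) ^ (i + 1))),
    prod_range_mul 2 K (fun i => (1 - (X : PS) ^ (i + 1))),
    prod_range_mul 2 K (fun i => (1 - ((X : PS) ^ 2) ^ (i + 1))),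
    ← Finset.prod_pow, ← Finset.prod_mul_distrib, ← Finset.prod_mul_distrib,
    ← Finset.prod_mul_distrib]
  apply Finset.prod_congr rfl
  intro j _
  simp only [Finset.prod_range_succ, Finset.prod_range_zero, one_mul]
  have hodd : (-X : PS) ^ (2 * j + 0 + 1) = -((X : PS) ^ (2 * j + 0 + 1)) :=
    Odd.neg_pow ⟨j, by ring⟩ X
  have heven : (-X : PS) ^ (2 * j + 1 + 1) = (X : PS) ^ (2 * j + 1 + 1) :=
    Even.neg_pow ⟨j + 1, by ring⟩ X
  rw [hodd, heven]
  ring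
end SplitE

section PentGauss
open PowerSeries

lemma natAbs_le_gamma (k : ℤ) : (k.natAbs : ℤ) ≤ (epn k : ℤ) + 2 * (emn k : ℤ) := by
  have h1 := two_ep k
  have h2 := two_em k
  rcases le_or_gt 0 k with h | h
  · rw [Int.natAbs_of_nonneg h]; nlinarith
  · rw [Int.ofNat_natAbs_of_nonpos (le_of_lt h)]; nlinarith

lemma natAbs_le_ep (k : ℤ) : (k.natAbs : ℤ) ≤ (epn k : ℤ) + 1 := by
  have h1 := two_ep k
  rcases le_or_gt 0 k with h | h
  · rw [Int.natAbs_of_nonneg h]; nlinarith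
  · rw [Int.ofNat_natAbs_of_nonpos (le_of_lt h)]; nlinarith

lemma epn_ge_self (m : ℕ) : m ≤ epn (m : ℤ) := by
  have h1 := two_ep (m : ℤ)
  have : 2 * ((m:ℤ)) ≤ 2 * (epn (m:ℤ) : ℤ) := by nlinarith
  omega

lemma epn_reflect (k : ℤ) : epn (-1 - k) = epn k := by
  have h1 := two_ep (-1 - k)
  have h2 := two_ep k
  have : (epn (-1 - k) : ℤ) = (epn k : ℤ) := by
    have h : 2 * (epn (-1 - k) : ℤ) = 2 * (epn k : ℤ) := by linear_combination h1 - h2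
    omega
  exact_mod_cast this

theorem pent (Z : PS) (hZ : X ∣ Z) (ν m : ℕ) (hm : m = 2 * ν + 2) :
    (X : PS) ^ ν ∣ F1 Z (3 * m) - ∑ k ∈ Finset.Icc (-(m:ℤ)) (m:ℤ), tt (-Z) (-Z^2) k := by
  have hjtp := jtp (-Z) (-Z ^ 2) m
  have hfac : ∀ j ∈ Finset.range m,
      (1 + -Z * (-Z * -Z ^ 2) ^ j) * (1 + -Z ^ 2 * (-Z * -Z ^ 2) ^ j)
        = (1 - Z ^ (3 * j + 1)) * (1 - Z ^ (3 * j + 2)) := by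
    intro j _; ring
  rw [Finset.prod_congr rfl hfac] at hjtp
  have hq : (-Z) * (-Z ^ 2) = Z ^ 3 := by ring
  rw [hq] at hjtp
  have hsplit := split3 Z m
  rw [hjtp] at hsplit
  rw [hsplit, Finset.sum_mul]
  apply cong_sum
  intro k hk
  simp only [Finset.mem_Icc] at hk
  have hZ3 : (X : PS) ∣ Z ^ 3 := hZ.trans (dvd_pow_self Z (by norm_num))
  by_cases hbig : ν ≤ epn k + 2 * emn k
  · -- the monomial itself is divisible by X^ν
    have htt : (X : PS) ^ ν ∣ tt (-Z) (-Z ^ 2) k := by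
      have d1 : (X : PS) ^ epn k ∣ (-Z) ^ epn k := pow_dvd_pow_of_dvd (hZ.neg_right) _
      have d2 : ((X : PS) ^ 2) ^ emn k ∣ (-Z ^ 2) ^ emn k :=
        pow_dvd_pow_of_dvd ((pow_dvd_pow_of_dvd hZ 2).neg_right) _
      have : (X : PS) ^ (epn k + 2 * emn k) ∣ tt (-Z) (-Z ^ 2) k := by
        rw [tt, pow_add, pow_mul]
        exact mul_dvd_mul d1 d2
      exact (pow_dvd_pow (X : PS) hbig).trans this
    exact dvd_sub ((htt.mul_left _).mul_right _) htt
  · push_neg at hbig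
    have hγ := natAbs_le_gamma k
    have hkb : k.natAbs ≤ ν := by omega
    have hknn : (0:ℤ) ≤ k + m := by omega
    rw [gbZ_of_nonneg _ _ hknn]
    have hst : (X : PS) ^ ν ∣ gb (Z ^ 3) (2 * m) (k + (m:ℤ)).toNat * F1 (Z ^ 3) m - 1 := by
      apply stab (X : PS) hZ3
      · omega
      · omega
      · omega
      · omega
    have hre : gb (Z ^ 3) (2 * m) (k + (m:ℤ)).toNat * tt (-Z) (-Z ^ 2) k * F1 (Z ^ 3) m
        - tt (-Z) (-Z ^ 2) k
        = tt (-Z) (-Z ^ 2) k * (gb (Z ^ 3) (2 * m) (k + (m:ℤ)).toNat * F1 (Z ^ 3) m - 1) := by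
      ring
    rw [hre]
    exact hst.mul_left _

theorem gauss (Z : PS) (hZ : X ∣ Z) (ν M : ℕ) (hM : M = 2 * ν + 1) :
    (X : PS) ^ ν ∣ F1 (Z ^ 2) M ^ 2 * F1 Z (M + 1)
      - (∑ k ∈ Finset.Icc (0:ℤ) (M:ℤ), Z ^ epn k) * F1 Z M ^ 2 := by
  set m := M + 1 with hmdef
  have hm : m = 2 * ν + 2 := by omega
  have hjtp := jtp Z 1 m
  rw [mul_one] at hjtp
  have htt1 : ∀ k, tt Z (1 : PS) k = Z ^ epn k := by
    intro k; rw [tt, one_pow, mul_one]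
  -- Step A : multiply by F1 Z m and stabilize
  have claimA : (X : PS) ^ ν ∣
      (∏ j ∈ Finset.range m, ((1 + Z * Z ^ j) * (1 + Z ^ j))) * F1 Z m
        - ∑ k ∈ Finset.Icc (-(m:ℤ)) (m:ℤ), Z ^ epn k := by
    have hfac : ∀ j ∈ Finset.range m,
        (1 + Z * Z ^ j) * (1 + 1 * Z ^ j) = (1 + Z * Z ^ j) * (1 + Z ^ j) := by
      intro j _; ring
    rw [Finset.prod_congr rfl hfac] at hjtp
    rw [hjtp, Finset.sum_mul]
    apply cong_sum
    intro k hk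
    simp only [Finset.mem_Icc] at hk
    rw [htt1]
    by_cases hbig : ν ≤ epn k
    · have htt : (X : PS) ^ ν ∣ Z ^ epn k :=
        (pow_dvd_pow (X:PS) hbig).trans (pow_dvd_pow_of_dvd hZ _)
      exact dvd_sub ((htt.mul_left _).mul_right _) htt
    · push_neg at hbig
      have hγ := natAbs_le_ep k
      have hkb : k.natAbs ≤ ν := by omega
      have hknn : (0:ℤ) ≤ k + m := by omega
      rw [gbZ_of_nonneg _ _ hknn]
      have hst : (X : PS) ^ ν ∣ gb Z (2 * m) (k + (m:ℤ)).toNat * F1 Z m - 1 := by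
        apply stab (X : PS) hZ <;> omega
      have hre : gb Z (2 * m) (k + (m:ℤ)).toNat * Z ^ epn k * F1 Z m - Z ^ epn k
          = Z ^ epn k * (gb Z (2 * m) (k + (m:ℤ)).toNat * F1 Z m - 1) := by ring
      rw [hre]
      exact hst.mul_left _
  -- Step B : fold the symmetric sum
  have hmZ : (m:ℤ) = (M:ℤ) + 1 := by rw [hmdef]; push_cast; ring
  set Ψ := ∑ k ∈ Finset.Icc (0:ℤ) (M:ℤ), Z ^ epn k with hΨ
  have hU : Finset.Icc (-(m:ℤ)) (m:ℤ) = Finset.Icc (-(m:ℤ)) (-1) ∪ Finset.Icc 0 (m:ℤ) := by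
    ext x
    simp only [Finset.mem_Icc, Finset.mem_union]
    omega
  have hdisj : Disjoint (Finset.Icc (-(m:ℤ)) (-1)) (Finset.Icc 0 (m:ℤ)) := by
    rw [Finset.disjoint_left]
    intro a ha ha'
    simp only [Finset.mem_Icc] at ha ha'
    omega
  have hU2 : Finset.Icc (0:ℤ) (m:ℤ) = insert ((m:ℤ)) (Finset.Icc 0 (M:ℤ)) := by
    ext x
    simp only [Finset.mem_Icc, Finset.mem_insert]
    omega
  have hnm : ((m:ℤ)) ∉ Finset.Icc (0:ℤ) (M:ℤ) := by
    simp only [Finset.mem_Icc]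
    omega
  have hrefl : ∑ k ∈ Finset.Icc (-(m:ℤ)) (-1), Z ^ epn k = Ψ := by
    rw [hΨ]
    apply Finset.sum_nbij' (i := fun k => -1 - k) (j := fun k => -1 - k)
    · intro a ha; simp only [Finset.mem_Icc] at ha ⊢; omega
    · intro a ha; simp only [Finset.mem_Icc] at ha ⊢; omega
    · intro a _; ring
    · intro a _; ring
    · intro a _; rw [epn_reflect]
  have hsum : ∑ k ∈ Finset.Icc (-(m:ℤ)) (m:ℤ), Z ^ epn k = 2 * Ψ + Z ^ epn (m:ℤ) := by
    rw [hU, Finset.sum_union hdisj, hU2, Finset.sum_insert hnm, hrefl]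
    ring
  -- Step C : the top monomial dies
  have htop : (X : PS) ^ ν ∣ Z ^ epn (m:ℤ) := by
    have h1 : ν ≤ epn (m:ℤ) := by have := epn_ge_self m; omega
    exact (pow_dvd_pow (X:PS) h1).trans (pow_dvd_pow_of_dvd hZ _)
  -- combine: X^ν ∣ LHS * F1 Z m - 2Ψ
  have hA2 : (X : PS) ^ ν ∣
      (∏ j ∈ Finset.range m, ((1 + Z * Z ^ j) * (1 + Z ^ j))) * F1 Z m - 2 * Ψ := by
    rw [hsum] at claimA
    have h2 := dvd_add claimA htop
    have heq : (∏ j ∈ Finset.range m, ((1 + Z * Z ^ j) * (1 + Z ^ j))) * F1 Z m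
          - (2 * Ψ + Z ^ epn (m:ℤ)) + Z ^ epn (m:ℤ)
        = (∏ j ∈ Finset.range m, ((1 + Z * Z ^ j) * (1 + Z ^ j))) * F1 Z m - 2 * Ψ := by ring
    rw [heq] at h2
    exact h2
  -- rewrite the product as 2 * Pp² * (1+Z^m)
  set Pp := ∏ j ∈ Finset.range M, (1 + Z ^ (j + 1)) with hPp
  have hL : (∏ j ∈ Finset.range m, ((1 + Z * Z ^ j) * (1 + Z ^ j)))
      = 2 * (Pp ^ 2 * (1 + Z ^ m)) := by
    rw [Finset.prod_mul_distrib]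
    have e1 : ∏ j ∈ Finset.range m, (1 + Z * Z ^ j) = Pp * (1 + Z ^ m) := by
      have : ∀ j ∈ Finset.range m, (1 + Z * Z ^ j) = (1 + Z ^ (j + 1)) := by
        intro j _; ring
      rw [Finset.prod_congr rfl this, hmdef, Finset.prod_range_succ, hPp]
    have e2 : ∏ j ∈ Finset.range m, (1 + Z ^ j) = Pp * 2 := by
      rw [hmdef, Finset.prod_range_succ' (fun j => (1 + Z ^ j)) M, hPp]
      norm_num
    rw [e1, e2]
    ring
  rw [hL] at hA2
  -- multiply by 2
  have hA3 : (X : PS) ^ ν ∣ Pp ^ 2 * (1 + Z ^ m) * F1 Z m - Ψ := by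
    have h4 := hA2.mul_right 2
    have heq : (2 * (Pp ^ 2 * (1 + Z ^ m)) * F1 Z m - 2 * Ψ) * 2
        = Pp ^ 2 * (1 + Z ^ m) * F1 Z m - Ψ
          + (Pp ^ 2 * (1 + Z ^ m) * F1 Z m - Ψ) * 3 := by ring
    rw [heq, show (3:PS) = 0 from three_eq_zero] at h4
    simpa using h4
  -- drop (1 + Z^m)
  have hA4 : (X : PS) ^ ν ∣ Pp ^ 2 * F1 Z m - Ψ := by
    have hdrop : (X : PS) ^ ν ∣ Pp ^ 2 * (1 + Z ^ m) * F1 Z m - Pp ^ 2 * F1 Z m := by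
      have heq : Pp ^ 2 * (1 + Z ^ m) * F1 Z m - Pp ^ 2 * F1 Z m
          = (Pp ^ 2 * F1 Z m) * Z ^ m := by ring
      rw [heq]
      have : (X : PS) ^ ν ∣ Z ^ m :=
        (pow_dvd_pow (X:PS) (by omega)).trans (pow_dvd_pow_of_dvd hZ _)
      exact this.mul_left _
    exact cong_trans (cong_symm hdrop) hA3
  -- multiply by F1 Z M ^ 2 and use plusminus
  have hA5 : (X : PS) ^ ν ∣ (Pp ^ 2 * F1 Z m) * F1 Z M ^ 2 - Ψ * F1 Z M ^ 2 := by
    have heq : (Pp ^ 2 * F1 Z m) * F1 Z M ^ 2 - Ψ * F1 Z M ^ 2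
        = (Pp ^ 2 * F1 Z m - Ψ) * F1 Z M ^ 2 := by ring
    rw [heq]
    exact hA4.mul_right _
  have hpm : (Pp ^ 2 * F1 Z m) * F1 Z M ^ 2 = F1 (Z ^ 2) M ^ 2 * F1 Z (M + 1) := by
    have := plusminus Z M
    rw [hPp]
    calc (∏ j ∈ Finset.range M, (1 + Z ^ (j+1))) ^ 2 * F1 Z m * F1 Z M ^ 2
        = ((∏ j ∈ Finset.range M, (1 + Z ^ (j+1))) * F1 Z M) ^ 2 * F1 Z m := by ring
      _ = F1 (Z ^ 2) M ^ 2 * F1 Z (M + 1) := by rw [this, hmdef]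
  rw [hpm] at hA5
  exact hA5
end PentGauss

section Assembly
open PowerSeries

variable (n : ℕ)

/-- canonical truncated eta-type products -/
noncomputable def g1 : PS := F1 (X : PS) (n + 1)
noncomputable def g2 : PS := F1 ((X : PS) ^ 2) (n + 1)
noncomputable def g3 : PS := F1 ((X : PS) ^ 3) (n + 1)
noncomputable def g4 : PS := F1 ((X : PS) ^ 4) (n + 1)
noncomputable def g6 : PS := F1 ((X : PS) ^ 6) (n + 1)
noncomputable def g12 : PS := F1 ((X : PS) ^ 12) (n + 1)
noncomputable def gE : PS := F1 (-(X : PS)) (n + 1)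

lemma cong_of_eq {R : Type*} [CommRing R] {M f g : R} (h : f = g) : M ∣ f - g := by
  rw [h, sub_self]; exact dvd_zero M

lemma harm {c : ℕ} (hc : c ≠ 0) {K K' : ℕ} (h1 : n ≤ K) (h2 : n ≤ K') :
    (X : PS) ^ (n + 1) ∣ F1 ((X : PS) ^ c) K - F1 ((X : PS) ^ c) K' :=
  F1_cong (X : PS) (dvd_pow_self (X : PS) hc) (by omega) (by omega)

lemma harmE {K K' : ℕ} (h1 : n ≤ K) (h2 : n ≤ K') :
    (X : PS) ^ (n + 1) ∣ F1 (-(X : PS)) K - F1 (-(X : PS)) K' :=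
  F1_cong (X : PS) (Dvd.dvd.neg_right dvd_rfl) (by omega) (by omega)

/-- the plus-product appearing in the defining relation -/
noncomputable def Pplus : PS := ∏ j ∈ Finset.range (n + 1), ((1 + (X : PS) ^ (6 * j + 1)) * (1 + (X : PS) ^ (6 * j + 5)))

lemma PD_eq : Pplus n * Dprod (X : PS) (n + 1) = Dprod ((X : PS) ^ 2) (n + 1) := by
  rw [Pplus, Dprod, Dprod, ← Finset.prod_mul_distrib]
  apply Finset.prod_congr rfl
  intro j _
  ring

lemma frob3 (K : ℕ) : F1 ((X : PS) ^ 3) K = F1 (X : PS) K ^ 3 := F1_cube _ _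

lemma frob6 (K : ℕ) : F1 ((X : PS) ^ 6) K = F1 ((X : PS) ^ 2) K ^ 3 := by
  rw [show ((X : PS) ^ 6) = ((X : PS) ^ 2) ^ 3 from by ring]
  exact F1_cube _ _

lemma frob12 (K : ℕ) : F1 ((X : PS) ^ 12) K = F1 ((X : PS) ^ 4) K ^ 3 := by
  rw [show ((X : PS) ^ 12) = ((X : PS) ^ 4) ^ 3 from by ring]
  exact F1_cube _ _

theorem keystep (CC : PS)
    (hCC : (X : PS) ^ (n + 1) ∣ CC * g1 n - g6 n * Pplus n) :
    (X : PS) ^ (n + 1) ∣ CC * (g1 n ^ 2 * g4 n * g2 n ^ 6)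
      - g1 n ^ 3 * g4 n ^ 3 * g2 n ^ 5 := by
  set A := n + 1 with hA
  set M : PS := (X : PS) ^ (n + 1) with hM
  -- exact split identities
  have e3 := split6 (X : PS) A
  have e4 := split6 ((X : PS) ^ 2) A
  rw [show (((X : PS) ^ 2) ^ 6) = (X : PS) ^ 12 from by ring,
    show (((X : PS) ^ 2) ^ 2) = (X : PS) ^ 4 from by ring,
    show (((X : PS) ^ 2) ^ 3) = (X : PS) ^ 6 from by ring] at e4
  -- c1 : CC * g1 * D ≈ g6 * D2
  have c1 : M ∣ CC * g1 n * Dprod (X : PS) A - g6 n * Dprod ((X : PS) ^ 2) A := by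
    have h := cong_mul hCC (dvd_sub_comm.mp (sub_self (Dprod (X : PS) A) ▸ dvd_zero M) : M ∣ Dprod (X : PS) A - Dprod (X : PS) A)
    rw [show g6 n * Pplus n * Dprod (X : PS) A = g6 n * (Pplus n * Dprod (X : PS) A) from by ring,
      PD_eq] at h
    exact h
  -- multiply by W1 := F1 (X^4) (3A) * F1 (X^6) (2A)
  have c2 : M ∣ CC * g1 n * Dprod (X : PS) A * (F1 ((X : PS) ^ 4) (3 * A) * F1 ((X : PS) ^ 6) (2 * A))
      - g6 n * (F1 ((X : PS) ^ 2) (6 * A) * F1 ((X : PS) ^ 12) A) := by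
    have h := c1.mul_right (F1 ((X : PS) ^ 4) (3 * A) * F1 ((X : PS) ^ 6) (2 * A))
    rw [sub_mul] at h
    have heq : g6 n * Dprod ((X : PS) ^ 2) A * (F1 ((X : PS) ^ 4) (3 * A) * F1 ((X : PS) ^ 6) (2 * A))
        = g6 n * (F1 ((X : PS) ^ 2) (6 * A) * F1 ((X : PS) ^ 12) A) := by
      linear_combination (g6 n) * e4.symm
    rw [heq] at h
    exact h
  -- multiply by W2 := F1 (X^2) (3A) * F1 (X^3) (2A)
  have c3 : M ∣ CC * g1 n * (F1 (X : PS) (6 * A) * F1 ((X : PS) ^ 6) A)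
        * (F1 ((X : PS) ^ 4) (3 * A) * F1 ((X : PS) ^ 6) (2 * A))
      - g6 n * (F1 ((X : PS) ^ 2) (6 * A) * F1 ((X : PS) ^ 12) A)
        * (F1 ((X : PS) ^ 2) (3 * A) * F1 ((X : PS) ^ 3) (2 * A)) := by
    have h := c2.mul_right (F1 ((X : PS) ^ 2) (3 * A) * F1 ((X : PS) ^ 3) (2 * A))
    rw [sub_mul] at h
    have heq : CC * g1 n * Dprod (X : PS) A * (F1 ((X : PS) ^ 4) (3 * A) * F1 ((X : PS) ^ 6) (2 * A))
          * (F1 ((X : PS) ^ 2) (3 * A) * F1 ((X : PS) ^ 3) (2 * A))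
        = CC * g1 n * (F1 (X : PS) (6 * A) * F1 ((X : PS) ^ 6) A)
          * (F1 ((X : PS) ^ 4) (3 * A) * F1 ((X : PS) ^ 6) (2 * A)) := by
      linear_combination (CC * g1 n * (F1 ((X : PS) ^ 4) (3 * A) * F1 ((X : PS) ^ 6) (2 * A))) * e3.symm
    rw [heq] at h
    exact h
  -- now harmonize all ranges to the canonical A = n+1
  have d1 : M ∣ F1 (X : PS) (6 * A) - g1 n := by
    rw [g1, hM]
    exact F1_cong (X : PS) dvd_rfl (by omega) (by omega)
  have d4 : M ∣ F1 ((X : PS) ^ 4) (3 * A) - g4 n := by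
    rw [g4, hM]; exact harm n (by norm_num) (by omega) (by omega)
  have d6 : M ∣ F1 ((X : PS) ^ 6) (2 * A) - g6 n := by
    rw [g6, hM]; exact harm n (by norm_num) (by omega) (by omega)
  have d2 : M ∣ F1 ((X : PS) ^ 2) (6 * A) - g2 n := by
    rw [g2, hM]; exact harm n (by norm_num) (by omega) (by omega)
  have d2' : M ∣ F1 ((X : PS) ^ 2) (3 * A) - g2 n := by
    rw [g2, hM]; exact harm n (by norm_num) (by omega) (by omega)
  have d3 : M ∣ F1 ((X : PS) ^ 3) (2 * A) - g3 n := by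
    rw [g3, hM]; exact harm n (by norm_num) (by omega) (by omega)
  have dre : M ∣ CC * g1 n * (g1 n * g6 n) * (g4 n * g6 n)
      - g6 n * (g2 n * g12 n) * (g2 n * g3 n) := by
    have hrefl : ∀ y : PS, M ∣ y - y := fun y => by rw [sub_self]; exact dvd_zero M
    have hL : M ∣ CC * g1 n * (F1 (X : PS) (6 * A) * F1 ((X : PS) ^ 6) A)
          * (F1 ((X : PS) ^ 4) (3 * A) * F1 ((X : PS) ^ 6) (2 * A))
        - CC * g1 n * (g1 n * g6 n) * (g4 n * g6 n) := by
      apply cong_mul (cong_mul (hrefl _) (cong_mul d1 (cong_of_eq (by rw [g6]))))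
      exact cong_mul d4 d6
    have hR : M ∣ g6 n * (F1 ((X : PS) ^ 2) (6 * A) * F1 ((X : PS) ^ 12) A)
          * (F1 ((X : PS) ^ 2) (3 * A) * F1 ((X : PS) ^ 3) (2 * A))
        - g6 n * (g2 n * g12 n) * (g2 n * g3 n) := by
      apply cong_mul (cong_mul (hrefl _) (cong_mul d2 (cong_of_eq (by rw [g12]))))
      exact cong_mul d2' d3
    exact cong_trans (cong_trans (cong_symm hL) c3) hR
  -- apply Frobenius relations
  have hfr : g6 n = g2 n ^ 3 := by rw [g6, g2]; exact frob6 _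
  have hfr3 : g3 n = g1 n ^ 3 := by rw [g3, g1]; exact frob3 _
  have hfr12 : g12 n = g4 n ^ 3 := by rw [g12, g4]; exact frob12 _
  have hL2 : CC * g1 n * (g1 n * g6 n) * (g4 n * g6 n)
      = CC * (g1 n ^ 2 * g4 n * g2 n ^ 6) := by rw [hfr]; ring
  have hR2 : g6 n * (g2 n * g12 n) * (g2 n * g3 n)
      = g1 n ^ 3 * g4 n ^ 3 * g2 n ^ 5 := by rw [hfr, hfr3, hfr12]; ring
  rw [hL2, hR2] at dre
  exact dre
end Assembly

section ThetaCong
open PowerSeries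

variable (n : ℕ)

lemma cong_refl {R : Type*} [CommRing R] (M y : R) : M ∣ y - y := by
  rw [sub_self]; exact dvd_zero M

noncomputable def PSUM : PS :=
  ∑ k ∈ Finset.Icc (-(2 * (n+1) + 2 : ℕ) : ℤ) ((2 * (n+1) + 2 : ℕ) : ℤ), tt (-(X:PS)) (-(X:PS)^2) k

noncomputable def PSUM4 : PS :=
  ∑ k ∈ Finset.Icc (-(2 * (n+1) + 2 : ℕ) : ℤ) ((2 * (n+1) + 2 : ℕ) : ℤ),
    tt (-((X:PS)^4)) (-((X:PS)^4)^2) k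

noncomputable def PsiA : PS :=
  ∑ k ∈ Finset.Icc (0 : ℤ) ((2 * (n+1) + 1 : ℕ) : ℤ), ((X:PS)^2) ^ epn k

noncomputable def PsiB : PS :=
  ∑ k ∈ Finset.Icc (0 : ℤ) ((2 * (n+1) + 1 : ℕ) : ℤ), (-(X:PS)) ^ epn k

lemma constF1 (Z : PS) (hZ : constantCoeff Z = 0) (K : ℕ) :
    constantCoeff (F1 Z K) = 1 := by
  rw [F1, map_prod]
  rw [Finset.prod_congr rfl (fun j _ => by
    rw [map_sub, map_one, map_pow, hZ, zero_pow (Nat.succ_ne_zero j)] : ∀ j ∈ Finset.range K, _ = _)]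
  simp

lemma unit_g (a b c d : ℕ) : IsUnit (g1 n ^ a * g4 n ^ b * g2 n ^ c * gE n ^ d) := by
  rw [PowerSeries.isUnit_iff_constantCoeff]
  rw [map_mul, map_mul, map_mul, map_pow, map_pow, map_pow, map_pow]
  rw [g1, g2, g4, gE, constF1 _ constantCoeff_X, constF1 _ (by rw [map_pow, constantCoeff_X]; ring),
    constF1 _ (by rw [map_pow, constantCoeff_X]; ring), constF1 _ (by rw [map_neg, constantCoeff_X]; ring)]
  simp

theorem congA (CC : PS)
    (hstar : (X : PS) ^ (n + 1) ∣ CC * (g1 n ^ 2 * g4 n * g2 n ^ 6)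
      - g1 n ^ 3 * g4 n ^ 3 * g2 n ^ 5) :
    (X : PS) ^ (n + 1) ∣ CC - PSUM n * PsiA n := by
  set M : PS := (X : PS) ^ (n + 1) with hM
  have hp1 : M ∣ g1 n - PSUM n := by
    have hpent := pent (X : PS) dvd_rfl (n + 1) (2 * (n+1) + 2) rfl
    have hh : M ∣ g1 n - F1 (X : PS) (3 * (2 * (n+1) + 2)) := by
      rw [g1, hM]; exact F1_cong (X : PS) dvd_rfl (by omega) (by omega)
    exact cong_trans hh (by rw [PSUM]; exact_mod_cast hpent)
  have hg1 : M ∣ g4 n ^ 2 * g2 n - PsiA n * g2 n ^ 2 := by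
    have hgauss := gauss ((X:PS)^2) (dvd_pow_self (X:PS) two_ne_zero) (n + 1) (2 * (n+1) + 1) rfl
    rw [show (((X:PS))^2)^2 = (X:PS)^4 from by ring] at hgauss
    have hL : M ∣ g4 n ^ 2 * g2 n
        - F1 ((X:PS)^4) (2 * (n+1) + 1) ^ 2 * F1 ((X:PS)^2) (2 * (n+1) + 1 + 1) := by
      apply cong_mul _ (by rw [g2, hM]; exact harm n (by norm_num) (by omega) (by omega))
      have h4 : M ∣ g4 n - F1 ((X:PS)^4) (2 * (n+1) + 1) := by
        rw [g4, hM]; exact harm n (by norm_num) (by omega) (by omega)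
      have := cong_mul h4 h4
      rw [show g4 n * g4 n = g4 n ^ 2 from by ring,
        show F1 ((X:PS)^4) (2 * (n+1) + 1) * F1 ((X:PS)^4) (2 * (n+1) + 1)
          = F1 ((X:PS)^4) (2 * (n+1) + 1) ^ 2 from by ring] at this
      exact this
    have hR : M ∣ PsiA n * F1 ((X:PS)^2) (2 * (n+1) + 1) ^ 2 - PsiA n * g2 n ^ 2 := by
      apply cong_mul (cong_refl M _)
      have h2 : M ∣ F1 ((X:PS)^2) (2 * (n+1) + 1) - g2 n := by
        rw [g2, hM]; exact harm n (by norm_num) (by omega) (by omega)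
      have := cong_mul h2 h2
      rw [show F1 ((X:PS)^2) (2 * (n+1) + 1) * F1 ((X:PS)^2) (2 * (n+1) + 1)
          = F1 ((X:PS)^2) (2 * (n+1) + 1) ^ 2 from by ring,
        show g2 n * g2 n = g2 n ^ 2 from by ring] at this
      exact this
    refine cong_trans (cong_trans hL ?_) hR
    rw [PsiA, hM]
    exact_mod_cast hgauss
  -- assemble
  have s1 : M ∣ PSUM n * PsiA n * (g1 n ^ 2 * g4 n * g2 n ^ 6)
      - g1 n * (PsiA n * g2 n ^ 2) * (g1 n ^ 2 * g4 n * g2 n ^ 4) := by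
    have h := cong_mul (cong_mul (cong_symm hp1) (cong_refl M (PsiA n * g2 n ^ 2)))
      (cong_refl M (g1 n ^ 2 * g4 n * g2 n ^ 4))
    have e : PSUM n * (PsiA n * g2 n ^ 2) * (g1 n ^ 2 * g4 n * g2 n ^ 4)
        = PSUM n * PsiA n * (g1 n ^ 2 * g4 n * g2 n ^ 6) := by ring
    rw [e] at h
    exact h
  have s2 : M ∣ g1 n * (PsiA n * g2 n ^ 2) * (g1 n ^ 2 * g4 n * g2 n ^ 4)
      - g1 n ^ 3 * g4 n ^ 3 * g2 n ^ 5 := by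
    have h := cong_mul (cong_mul (cong_refl M (g1 n)) (cong_symm hg1))
      (cong_refl M (g1 n ^ 2 * g4 n * g2 n ^ 4))
    have e : g1 n * (g4 n ^ 2 * g2 n) * (g1 n ^ 2 * g4 n * g2 n ^ 4)
        = g1 n ^ 3 * g4 n ^ 3 * g2 n ^ 5 := by ring
    rw [e] at h
    exact h
  have hfin : M ∣ PSUM n * PsiA n * (g1 n ^ 2 * g4 n * g2 n ^ 6)
      - CC * (g1 n ^ 2 * g4 n * g2 n ^ 6) :=
    cong_trans (cong_trans s1 s2) (cong_symm hstar)
  have := cong_cancel (g1 n ^ 2 * g4 n * g2 n ^ 6)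
    (by have := unit_g n 2 1 6 0; simpa using this) (cong_symm hfin)
  exact this
end ThetaCong

section ThetaCongB
open PowerSeries

variable (n : ℕ)

theorem congB (CC : PS)
    (hstar : (X : PS) ^ (n + 1) ∣ CC * (g1 n ^ 2 * g4 n * g2 n ^ 6)
      - g1 n ^ 3 * g4 n ^ 3 * g2 n ^ 5) :
    (X : PS) ^ (n + 1) ∣ CC - PSUM4 n * PsiB n := by
  set M : PS := (X : PS) ^ (n + 1) with hM
  -- pent at X^4
  have hp4 : M ∣ g4 n - PSUM4 n := by
    have hpent := pent ((X:PS)^4) (dvd_pow_self (X:PS) (by norm_num)) (n + 1) (2 * (n+1) + 2) rfl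
    have hh : M ∣ g4 n - F1 ((X:PS)^4) (3 * (2 * (n+1) + 2)) := by
      rw [g4, hM]; exact harm n (by norm_num) (by omega) (by omega)
    exact cong_trans hh (by rw [PSUM4]; exact_mod_cast hpent)
  -- gauss at -X
  have hg2 : M ∣ g2 n ^ 2 * gE n - PsiB n * gE n ^ 2 := by
    have hgauss := gauss (-(X:PS)) (Dvd.dvd.neg_right dvd_rfl) (n + 1) (2 * (n+1) + 1) rfl
    rw [show ((-(X:PS)) ^ 2) = (X:PS) ^ 2 from by ring] at hgauss
    have hsq2 : M ∣ g2 n ^ 2 - F1 ((X:PS)^2) (2 * (n+1) + 1) ^ 2 := by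
      have h2 : M ∣ g2 n - F1 ((X:PS)^2) (2 * (n+1) + 1) := by
        rw [g2, hM]; exact harm n (by norm_num) (by omega) (by omega)
      have h := cong_mul h2 h2
      rw [show g2 n * g2 n = g2 n ^ 2 from by ring,
        show F1 ((X:PS)^2) (2 * (n+1) + 1) * F1 ((X:PS)^2) (2 * (n+1) + 1)
          = F1 ((X:PS)^2) (2 * (n+1) + 1) ^ 2 from by ring] at h
      exact h
    have hsqE : M ∣ F1 (-(X:PS)) (2 * (n+1) + 1) ^ 2 - gE n ^ 2 := by
      have h2 : M ∣ F1 (-(X:PS)) (2 * (n+1) + 1) - gE n := by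
        rw [gE, hM]; exact harmE n (by omega) (by omega)
      have h := cong_mul h2 h2
      rw [show gE n * gE n = gE n ^ 2 from by ring,
        show F1 (-(X:PS)) (2 * (n+1) + 1) * F1 (-(X:PS)) (2 * (n+1) + 1)
          = F1 (-(X:PS)) (2 * (n+1) + 1) ^ 2 from by ring] at h
      exact h
    have hL : M ∣ g2 n ^ 2 * gE n
        - F1 ((X:PS)^2) (2 * (n+1) + 1) ^ 2 * F1 (-(X:PS)) (2 * (n+1) + 1 + 1) :=
      cong_mul hsq2 (by rw [gE, hM]; exact harmE n (by omega) (by omega))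
    have hR : M ∣ PsiB n * F1 (-(X:PS)) (2 * (n+1) + 1) ^ 2 - PsiB n * gE n ^ 2 :=
      cong_mul (cong_refl M _) hsqE
    refine cong_trans (cong_trans hL ?_) hR
    rw [PsiB, hM]
    exact_mod_cast hgauss
  -- the exact -X split identity, harmonized
  have hEid : M ∣ gE n * (g1 n * g4 n) - g2 n ^ 3 := by
    have hsp := splitE (n + 1)
    have cL : M ∣ gE n * (g1 n * g4 n)
        - F1 (-(X:PS)) (2 * (n+1)) * (F1 (X:PS) (2 * (n+1)) * F1 ((X:PS)^4) (n+1)) := by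
      apply cong_mul (by rw [gE, hM]; exact harmE n (by omega) (by omega))
      apply cong_mul (by rw [g1, hM]; exact F1_cong (X : PS) dvd_rfl (by omega) (by omega))
      exact cong_of_eq (by rw [g4])
    rw [hsp] at cL
    have cR : M ∣ F1 ((X:PS)^2) (n+1) ^ 2 * F1 ((X:PS)^2) (2 * (n+1)) - g2 n ^ 3 := by
      have h := cong_mul (cong_of_eq (show F1 ((X:PS)^2) (n+1) ^ 2 = g2 n ^ 2 from by rw [g2]))
        (show M ∣ F1 ((X:PS)^2) (2 * (n+1)) - g2 n from by
          rw [g2, hM]; exact harm n (by norm_num) (by omega) (by omega))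
      rw [show g2 n ^ 2 * g2 n = g2 n ^ 3 from by ring] at h
      exact h
    exact cong_trans cL cR
  -- left chain
  have l1 : M ∣ CC * (g1 n ^ 2 * g4 n * g2 n ^ 6 * gE n ^ 2)
      - g1 n ^ 3 * g4 n ^ 3 * g2 n ^ 5 * gE n ^ 2 := by
    have h := cong_mul hstar (cong_refl M (gE n ^ 2))
    have e : CC * (g1 n ^ 2 * g4 n * g2 n ^ 6) * gE n ^ 2
        = CC * (g1 n ^ 2 * g4 n * g2 n ^ 6 * gE n ^ 2) := by ring
    rw [e] at h
    exact h
  have l2 : M ∣ g1 n ^ 3 * g4 n ^ 3 * g2 n ^ 5 * gE n ^ 2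
      - g1 n * g4 n * g2 n ^ 11 := by
    have h := cong_mul (cong_mul hEid hEid) (cong_refl M (g1 n * g4 n * g2 n ^ 5))
    have e1 : gE n * (g1 n * g4 n) * (gE n * (g1 n * g4 n)) * (g1 n * g4 n * g2 n ^ 5)
        = g1 n ^ 3 * g4 n ^ 3 * g2 n ^ 5 * gE n ^ 2 := by ring
    have e2 : g2 n ^ 3 * g2 n ^ 3 * (g1 n * g4 n * g2 n ^ 5) = g1 n * g4 n * g2 n ^ 11 := by ring
    rw [e1, e2] at h
    exact h
  -- right chain
  have r1 : M ∣ PSUM4 n * PsiB n * (g1 n ^ 2 * g4 n * g2 n ^ 6 * gE n ^ 2)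
      - g4 n * (g2 n ^ 2 * gE n) * (g1 n ^ 2 * g4 n * g2 n ^ 6) := by
    have h := cong_mul (cong_mul (cong_symm hp4) (cong_symm hg2))
      (cong_refl M (g1 n ^ 2 * g4 n * g2 n ^ 6))
    have e : PSUM4 n * (PsiB n * gE n ^ 2) * (g1 n ^ 2 * g4 n * g2 n ^ 6)
        = PSUM4 n * PsiB n * (g1 n ^ 2 * g4 n * g2 n ^ 6 * gE n ^ 2) := by ring
    rw [e] at h
    exact h
  have r2 : M ∣ g4 n * (g2 n ^ 2 * gE n) * (g1 n ^ 2 * g4 n * g2 n ^ 6)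
      - g1 n * g4 n * g2 n ^ 11 := by
    have h := cong_mul hEid (cong_refl M (g1 n * g4 n * g2 n ^ 8))
    have e1 : gE n * (g1 n * g4 n) * (g1 n * g4 n * g2 n ^ 8)
        = g4 n * (g2 n ^ 2 * gE n) * (g1 n ^ 2 * g4 n * g2 n ^ 6) := by ring
    have e2 : g2 n ^ 3 * (g1 n * g4 n * g2 n ^ 8) = g1 n * g4 n * g2 n ^ 11 := by ring
    rw [e1, e2] at h
    exact h
  have hfin : M ∣ PSUM4 n * PsiB n * (g1 n ^ 2 * g4 n * g2 n ^ 6 * gE n ^ 2)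
      - CC * (g1 n ^ 2 * g4 n * g2 n ^ 6 * gE n ^ 2) :=
    cong_trans (cong_trans r1 r2) (cong_trans (cong_symm l2) (cong_symm l1))
  exact cong_cancel (g1 n ^ 2 * g4 n * g2 n ^ 6 * gE n ^ 2)
    (by have := unit_g n 2 1 6 2; simpa using this) (cong_symm hfin)
end ThetaCongB

section Bridge
open PowerSeries

lemma coeff_eq_of_dvd {f g : PS} {i : ℕ} (h : (X:PS) ^ (i+1) ∣ f - g) :
    coeff i f = coeff i g := by
  rw [PowerSeries.X_pow_dvd_iff] at h
  have := h i (by omega)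
  rw [map_sub] at this
  exact sub_eq_zero.mp this

theorem bridge (n : ℕ) (C : ℕ → ℤ)
    (hC : ∀ N : ℕ, PowerSeries.coeff N
      ((PowerSeries.mk fun j => C j) *
        ∏ j ∈ Finset.range (N + 1), (1 - (PowerSeries.X : PowerSeries ℤ) ^ (j + 1))) =
      PowerSeries.coeff N
      (∏ j ∈ Finset.range (N + 1),
        ((1 - (PowerSeries.X : PowerSeries ℤ) ^ (6 * (j + 1))) *
          (1 + PowerSeries.X ^ (6 * j + 1)) * (1 + PowerSeries.X ^ (6 * j + 5))))) :
    (X : PS) ^ (n + 1) ∣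
      (PowerSeries.mk fun i => ((C i : ℤ) : ZMod 3)) * g1 n - g6 n * Pplus n := by
  set φ := Int.castRingHom (ZMod 3) with hφ
  set CC : PS := PowerSeries.mk fun i => ((C i : ℤ) : ZMod 3) with hCCdef
  have hmapmk : PowerSeries.map φ (PowerSeries.mk fun j => C j) = CC := by
    ext k
    simp [PowerSeries.coeff_map, hCCdef]
  have hmap : ∀ N : ℕ, coeff N (CC * F1 (X:PS) (N+1))
      = coeff N (∏ j ∈ Finset.range (N + 1),
          ((1 - (X:PS) ^ (6 * (j + 1))) * (1 + (X:PS) ^ (6 * j + 1)) * (1 + (X:PS) ^ (6 * j + 5)))) := by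
    intro N
    have h := congrArg φ (hC N)
    rw [← PowerSeries.coeff_map, ← PowerSeries.coeff_map] at h
    have hL : PowerSeries.map φ ((PowerSeries.mk fun j => C j) *
        ∏ j ∈ Finset.range (N + 1), (1 - (PowerSeries.X : PowerSeries ℤ) ^ (j + 1)))
        = CC * F1 (X:PS) (N+1) := by
      rw [map_mul, hmapmk, F1, map_prod]
      congr 1
      apply Finset.prod_congr rfl
      intro j _
      rw [map_sub, map_one, map_pow, PowerSeries.map_X]
    have hR : PowerSeries.map φ (∏ j ∈ Finset.range (N + 1),
        ((1 - (PowerSeries.X : PowerSeries ℤ) ^ (6 * (j + 1))) *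
          (1 + PowerSeries.X ^ (6 * j + 1)) * (1 + PowerSeries.X ^ (6 * j + 5))))
        = ∏ j ∈ Finset.range (N + 1),
          ((1 - (X:PS) ^ (6 * (j + 1))) * (1 + (X:PS) ^ (6 * j + 1)) * (1 + (X:PS) ^ (6 * j + 5))) := by
      rw [map_prod]
      apply Finset.prod_congr rfl
      intro j _
      rw [map_mul, map_mul, map_sub, map_add, map_add, map_one, map_pow, map_pow, map_pow,
        PowerSeries.map_X]
    rw [hL, hR] at h
    exact h
  -- the exact regrouping of g6 * Pplus
  have hreg : g6 n * Pplus n = ∏ j ∈ Finset.range (n + 1),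
      ((1 - (X:PS) ^ (6 * (j + 1))) * (1 + (X:PS) ^ (6 * j + 1)) * (1 + (X:PS) ^ (6 * j + 5))) := by
    rw [g6, F1, Pplus, ← Finset.prod_mul_distrib]
    apply Finset.prod_congr rfl
    intro j _
    rw [show ((X:PS) ^ 6) ^ (j+1) = (X:PS) ^ (6 * (j+1)) from by rw [← pow_mul]]
    ring
  rw [PowerSeries.X_pow_dvd_iff]
  intro i hi
  have hii : i ≤ n := by omega
  rw [map_sub, sub_eq_zero]
  -- left side: change range n+1 to i+1
  have hdL : (X:PS) ^ (i+1) ∣ CC * g1 n - CC * F1 (X:PS) (i+1) := by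
    have hF : (X:PS) ^ (i+1) ∣ g1 n - F1 (X:PS) (i+1) := by
      rw [g1]
      exact F1_cong (X : PS) dvd_rfl (by omega) (by omega)
    have h := hF.mul_left CC
    rw [mul_sub] at h
    exact h
  -- right side: change range n+1 to i+1
  have hdR : (X:PS) ^ (i+1) ∣ (∏ j ∈ Finset.range (n + 1),
      ((1 - (X:PS) ^ (6 * (j + 1))) * (1 + (X:PS) ^ (6 * j + 1)) * (1 + (X:PS) ^ (6 * j + 5))))
      - ∏ j ∈ Finset.range (i + 1),
      ((1 - (X:PS) ^ (6 * (j + 1))) * (1 + (X:PS) ^ (6 * j + 1)) * (1 + (X:PS) ^ (6 * j + 5))) := by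
    obtain ⟨d, hd⟩ : ∃ d, n + 1 = (i + 1) + d := ⟨n - i, by omega⟩
    rw [hd, Finset.prod_range_add]
    have hrest : (X:PS) ^ (i+1) ∣ (∏ j ∈ Finset.range d,
        ((1 - (X:PS) ^ (6 * ((i + 1 + j) + 1))) * (1 + (X:PS) ^ (6 * (i + 1 + j) + 1))
          * (1 + (X:PS) ^ (6 * (i + 1 + j) + 5)))) - 1 := by
      apply cong_prod_one
      intro j _
      have c1 : (X:PS) ^ (i+1) ∣ (1 - (X:PS) ^ (6 * ((i + 1 + j) + 1))) - 1 :=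
        one_sub_shift (X:PS) dvd_rfl (by omega)
      have c2 : (X:PS) ^ (i+1) ∣ (1 + (X:PS) ^ (6 * (i + 1 + j) + 1)) - 1 := by
        have : (1 + (X:PS) ^ (6 * (i + 1 + j) + 1)) - 1 = (X:PS) ^ (6 * (i + 1 + j) + 1) := by ring
        rw [this]
        exact pow_dvd_pow (X:PS) (by omega)
      have c3 : (X:PS) ^ (i+1) ∣ (1 + (X:PS) ^ (6 * (i + 1 + j) + 5)) - 1 := by
        have : (1 + (X:PS) ^ (6 * (i + 1 + j) + 5)) - 1 = (X:PS) ^ (6 * (i + 1 + j) + 5) := by ring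
        rw [this]
        exact pow_dvd_pow (X:PS) (by omega)
      have := cong_mul (cong_mul c1 c2) c3
      simpa using this
    have heq : (∏ j ∈ Finset.range (i+1),
        ((1 - (X:PS) ^ (6 * (j + 1))) * (1 + (X:PS) ^ (6 * j + 1)) * (1 + (X:PS) ^ (6 * j + 5))))
        * (∏ j ∈ Finset.range d,
        ((1 - (X:PS) ^ (6 * ((i + 1 + j) + 1))) * (1 + (X:PS) ^ (6 * (i + 1 + j) + 1))
          * (1 + (X:PS) ^ (6 * (i + 1 + j) + 5))))
        - ∏ j ∈ Finset.range (i+1),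
        ((1 - (X:PS) ^ (6 * (j + 1))) * (1 + (X:PS) ^ (6 * j + 1)) * (1 + (X:PS) ^ (6 * j + 5)))
        = (∏ j ∈ Finset.range (i+1),
        ((1 - (X:PS) ^ (6 * (j + 1))) * (1 + (X:PS) ^ (6 * j + 1)) * (1 + (X:PS) ^ (6 * j + 5))))
        * ((∏ j ∈ Finset.range d,
        ((1 - (X:PS) ^ (6 * ((i + 1 + j) + 1))) * (1 + (X:PS) ^ (6 * (i + 1 + j) + 1))
          * (1 + (X:PS) ^ (6 * (i + 1 + j) + 5)))) - 1) := by ring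
    rw [heq]
    exact hrest.mul_left _
  calc coeff i (CC * g1 n)
      = coeff i (CC * F1 (X:PS) (i+1)) := coeff_eq_of_dvd hdL
    _ = coeff i (∏ j ∈ Finset.range (i + 1),
          ((1 - (X:PS) ^ (6 * (j + 1))) * (1 + (X:PS) ^ (6 * j + 1)) * (1 + (X:PS) ^ (6 * j + 5)))) :=
        hmap i
    _ = coeff i (∏ j ∈ Finset.range (n + 1),
          ((1 - (X:PS) ^ (6 * (j + 1))) * (1 + (X:PS) ^ (6 * j + 1)) * (1 + (X:PS) ^ (6 * j + 5)))) :=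
        (coeff_eq_of_dvd hdR).symm
    _ = coeff i (g6 n * Pplus n) := by rw [hreg]
end Bridge

section FinalCoeff
open PowerSeries

theorem coeffA (n : ℕ)
    (hA : ¬ ∃ (k l : ℤ), 1 ≤ l ∧ 2 * (n : ℤ) = k * (3 * k - 1) + 2 * (l * (l - 1))) :
    coeff n (PSUM n * PsiA n) = 0 := by
  rw [PSUM, PsiA, Finset.sum_mul_sum, map_sum]
  apply Finset.sum_eq_zero
  intro k hk
  rw [map_sum]
  apply Finset.sum_eq_zero
  intro j hj
  simp only [Finset.mem_Icc] at hk hj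
  have hform : tt (-(X:PS)) (-(X:PS)^2) k * ((X:PS)^2) ^ epn j
      = (-1 : PS) ^ (epn k + emn k) * (X:PS) ^ (epn k + 2 * emn k + 2 * epn j) := by
    rw [tt, neg_pow, neg_pow]
    ring
  rw [hform]
  have hne : epn k + 2 * emn k + 2 * epn j ≠ n := by
    intro hEq
    apply hA
    refine ⟨k, j + 1, by omega, ?_⟩
    have h1 := two_ep k
    have h2 := two_em k
    have h3 := two_ep j
    have hcast : ((epn k : ℤ) + 2 * (emn k : ℤ) + 2 * (epn j : ℤ)) = (n : ℤ) := by
      exact_mod_cast congrArg (fun t : ℕ => (t : ℤ)) hEq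
    linear_combination (-2 : ℤ) * hcast + h1 + 2 * h2 + 2 * h3
  rcases neg_one_pow_eq_or PS (epn k + emn k) with h | h
  · rw [h, one_mul, PowerSeries.coeff_X_pow, if_neg (fun hh => hne hh.symm)]
  · rw [h, neg_one_mul, map_neg, PowerSeries.coeff_X_pow, if_neg (fun hh => hne hh.symm), neg_zero]

theorem coeffB (n : ℕ)
    (hB : ¬ ∃ (k l : ℤ), 1 ≤ l ∧ 2 * (n : ℤ) = l * (l - 1) + 4 * (k * (3 * k - 1))) :
    coeff n (PSUM4 n * PsiB n) = 0 := by
  rw [PSUM4, PsiB, Finset.sum_mul_sum, map_sum]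
  apply Finset.sum_eq_zero
  intro k hk
  rw [map_sum]
  apply Finset.sum_eq_zero
  intro j hj
  simp only [Finset.mem_Icc] at hk hj
  have hform : tt (-((X:PS)^4)) (-((X:PS)^4)^2) k * (-(X:PS)) ^ epn j
      = (-1 : PS) ^ (epn k + emn k + epn j)
        * (X:PS) ^ (4 * epn k + 8 * emn k + epn j) := by
    rw [tt, neg_pow, neg_pow, neg_pow]
    ring
  rw [hform]
  have hne : 4 * epn k + 8 * emn k + epn j ≠ n := by
    intro hEq
    apply hB
    refine ⟨k, j + 1, by omega, ?_⟩
    have h1 := two_ep k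
    have h2 := two_em k
    have h3 := two_ep j
    have hcast : (4 * (epn k : ℤ) + 8 * (emn k : ℤ) + (epn j : ℤ)) = (n : ℤ) := by
      exact_mod_cast congrArg (fun t : ℕ => (t : ℤ)) hEq
    linear_combination (-2 : ℤ) * hcast + 4 * h1 + 8 * h2 + h3
  rcases neg_one_pow_eq_or PS (epn k + emn k + epn j) with h | h
  · rw [h, one_mul, PowerSeries.coeff_X_pow, if_neg (fun hh => hne hh.symm)]
  · rw [h, neg_one_mul, map_neg, PowerSeries.coeff_X_pow, if_neg (fun hh => hne hh.symm), neg_zero]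

end FinalCoeff

/-- For `n ≥ 1`: if `n` is not a generalized pentagonal number plus twice a triangular
number, or `n` is not a triangular number plus four times a generalized pentagonal
number, then `C̄₆₁(n) ≡ 0 (mod 3)` (here `n = k(3k-1)/2 + ℓ(ℓ-1)` is stated as
`2n = k(3k-1) + 2ℓ(ℓ-1)`, and `n = ℓ(ℓ-1)/2 + 4·k(3k-1)/2` as
`2n = ℓ(ℓ-1) + 4k(3k-1)`, with `ℓ ≥ 1`). -/
theorem C61_mod_three (C : ℕ → ℤ)
    (hC : ∀ N : ℕ, PowerSeries.coeff N
      ((PowerSeries.mk fun n => C n) *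
        ∏ n ∈ Finset.range (N + 1), (1 - (PowerSeries.X : PowerSeries ℤ) ^ (n + 1))) =
      PowerSeries.coeff N
      (∏ n ∈ Finset.range (N + 1),
        ((1 - (PowerSeries.X : PowerSeries ℤ) ^ (6 * (n + 1))) *
          (1 + PowerSeries.X ^ (6 * n + 1)) * (1 + PowerSeries.X ^ (6 * n + 5)))))
    (n : ℕ) (hn : 1 ≤ n)
    (h : (¬ ∃ (k l : ℤ), 1 ≤ l ∧ 2 * (n : ℤ) = k * (3 * k - 1) + 2 * (l * (l - 1))) ∨
         (¬ ∃ (k l : ℤ), 1 ≤ l ∧ 2 * (n : ℤ) = l * (l - 1) + 4 * (k * (3 * k - 1)))) :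
    C n ≡ 0 [ZMOD 3] := by
  classical
  set CC : PS := PowerSeries.mk fun i => ((C i : ℤ) : ZMod 3) with hCCdef
  have hbr : (PowerSeries.X : PS) ^ (n + 1) ∣ CC * g1 n - g6 n * Pplus n := bridge n C hC
  have hstar := keystep n CC hbr
  have hCCn : PowerSeries.coeff n CC = ((C n : ℤ) : ZMod 3) := by
    rw [hCCdef, PowerSeries.coeff_mk]
  have hzero : ((C n : ℤ) : ZMod 3) = 0 := by
    rcases h with hA | hB
    · have hcong := congA n CC hstar
      have := coeff_eq_of_dvd (i := n) hcong
      rw [hCCn, coeffA n hA] at this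
      exact this
    · have hcong := congB n CC hstar
      have := coeff_eq_of_dvd (i := n) hcong
      rw [hCCn, coeffB n hB] at this
      exact this
  have hdvd : (3 : ℤ) ∣ C n := by
    have := (ZMod.intCast_zmod_eq_zero_iff_dvd (C n) 3).mp hzero
    exact_mod_cast this
  exact Int.modEq_zero_iff_dvd.mpr hdvd
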